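/- Let M* (the true dynamics) and M̂ (the estimated dynamics) be two deterministic transition models, and suppose the value function V^π_{M̂} is L-Lipschitz as a function of the initial state. Fix an initial state s₀ with V^π_{M̂}(s₀) > 0, and suppose the quantity e = κ · L · E_{(s,a)∼ρ^π_{M*}}[dist(M*(s,a), M̂(s,a))] (visitation expectation taken along the trajectory of M* from s₀) is finite. Then the performance of π on the true dynamics is lower bounded by that on the estimated dynamics weighted by the uncertainty regularized coefficient: V^π_{M*}(s₀) ≥ V^π_{M̂}(s₀) · (V^π_{M̂}(s₀) − e)/V^π_{M̂}(s₀). -/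

import Mathlib

open scoped ENNReal

/-- Trajectory of a deterministic model `M` under policy `π` from initial state `s₀`. -/
noncomputable def traj {S A : Type*} (M : S × A → S) (π : S → A) (s₀ : S) : ℕ → S
  | 0 => s₀
  | n + 1 => M (traj M π s₀ n, π (traj M π s₀ n))

/-- Value function `V^π_M(s₀) = Σ_t γ^t r(s_t, π(s_t))` along the trajectory of `M`. -/
noncomputable def value {S A : Type*} (M : S × A → S) (π : S → A)
    (r : S × A → ℝ) (γ : ℝ) (s₀ : S) : ℝ :=
  ∑' t : ℕ, γ ^ t * r (traj M π s₀ t, π (traj M π s₀ t))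

lemma traj_shift {S A : Type*} (M : S × A → S) (π : S → A) (s : S) :
    ∀ n, traj M π (M (s, π s)) n = traj M π s (n + 1)
  | 0 => rfl
  | n + 1 => by
      show M (traj M π (M (s, π s)) n, π (traj M π (M (s, π s)) n)) = _
      rw [traj_shift M π s n]; rfl

lemma summable_val {S A : Type*} (M : S × A → S) (π : S → A) (r : S × A → ℝ)
    {R γ : ℝ} (hγ0 : 0 < γ) (hγ1 : γ < 1) (hR : ∀ p, |r p| ≤ R) (s : S) :
    Summable (fun t => γ ^ t * r (traj M π s t, π (traj M π s t))) := by
  apply Summable.of_norm_bounded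
    ((summable_geometric_of_lt_one hγ0.le hγ1).mul_left R)
  intro t
  rw [Real.norm_eq_abs, abs_mul, abs_pow, abs_of_pos hγ0, mul_comm]
  exact mul_le_mul_of_nonneg_right (hR _) (pow_nonneg hγ0.le t)

lemma value_bellman {S A : Type*} (M : S × A → S) (π : S → A) (r : S × A → ℝ)
    {R γ : ℝ} (hγ0 : 0 < γ) (hγ1 : γ < 1) (hR : ∀ p, |r p| ≤ R) (s : S) :
    value M π r γ s = r (s, π s) + γ * value M π r γ (M (s, π s)) := by
  have hs := summable_val M π r hγ0 hγ1 hR s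
  rw [value, Summable.tsum_eq_zero_add hs]
  congr 1
  · show γ ^ 0 * r (s, π s) = r (s, π s); ring
  · rw [value, ← tsum_mul_left]
    exact tsum_congr fun n => by rw [traj_shift M π s n]; ring

lemma abs_value_le {S A : Type*} (M : S × A → S) (π : S → A) (r : S × A → ℝ)
    {R γ : ℝ} (hγ0 : 0 < γ) (hγ1 : γ < 1) (hR : ∀ p, |r p| ≤ R) (s : S) :
    |value M π r γ s| ≤ R * (1 - γ)⁻¹ := by
  have hgeo : Summable (fun t : ℕ => R * γ ^ t) :=
    (summable_geometric_of_lt_one hγ0.le hγ1).mul_left R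
  have hb : ∀ t : ℕ, ‖γ ^ t * r (traj M π s t, π (traj M π s t))‖ ≤ R * γ ^ t := by
    intro t
    rw [Real.norm_eq_abs, abs_mul, abs_pow, abs_of_pos hγ0, mul_comm]
    exact mul_le_mul_of_nonneg_right (hR _) (pow_nonneg hγ0.le t)
  calc |value M π r γ s| ≤ ∑' t : ℕ, R * γ ^ t := by
        rw [value, ← Real.norm_eq_abs]
        exact norm_tsum_le_tsum_norm (hgeo.of_nonneg_of_le (fun t => norm_nonneg _) hb)
          |>.trans (Summable.tsum_le_tsum hb (hgeo.of_nonneg_of_le (fun t => norm_nonneg _) hb) hgeo)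
    _ = R * (1 - γ)⁻¹ := by rw [tsum_mul_left, tsum_geometric_of_lt_one hγ0.le hγ1]

/-- If `V^π_M̂` is `L`-Lipschitz, `V^π_M̂(s₀) > 0`, and the quantity
`e = κ·L·E_{(s,a)∼ρ^π_{M*}}[dist(M*(s,a), M̂(s,a))]` is finite, then
`V^π_{M*}(s₀) ≥ V^π_{M̂}(s₀) · (V^π_{M̂}(s₀) − e)/V^π_{M̂}(s₀)` (the lower bound
weighted by the uncertainty regularized coefficient). -/
theorem value_true_ge_value_est_mul_uncertainty_coeff
    {S A : Type*} [MetricSpace S]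
    (Mstar Mhat : S × A → S) (π : S → A) (r : S × A → ℝ) (R γ L : ℝ)
    (hγ0 : 0 < γ) (hγ1 : γ < 1)
    (hR : ∀ p : S × A, |r p| ≤ R)
    (hL : 0 ≤ L)
    (hLip : ∀ s s' : S, |value Mhat π r γ s - value Mhat π r γ s'| ≤ L * dist s s')
    (s₀ : S)
    (hV : 0 < value Mhat π r γ s₀)
    (E : ℝ≥0∞)
    (hE : E = ENNReal.ofReal (γ / (1 - γ) * L) *
      (ENNReal.ofReal (1 - γ) *
        ∑' t : ℕ, ENNReal.ofReal (γ ^ t) *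
          ENNReal.ofReal (dist (Mstar (traj Mstar π s₀ t, π (traj Mstar π s₀ t)))
            (Mhat (traj Mstar π s₀ t, π (traj Mstar π s₀ t))))))
    (hfin : E ≠ ⊤) :
    value Mstar π r γ s₀ ≥
      value Mhat π r γ s₀ *
        ((value Mhat π r γ s₀ - E.toReal) / value Mhat π r γ s₀) := by
  have hγ' : 0 < 1 - γ := by linarith
  rw [mul_comm, div_mul_cancel₀ _ hV.ne']
  -- notation
  set s : ℕ → S := traj Mstar π s₀ with hs
  set D : ℕ → ℝ := fun t => dist (Mstar (s t, π (s t))) (Mhat (s t, π (s t))) with hD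
  set Vh : S → ℝ := value Mhat π r γ with hVh
  -- the relevant series
  set c : ℕ → ℝ := fun t => γ ^ (t + 1) * (Vh (s (t + 1)) - Vh (Mhat (s t, π (s t)))) with hc
  -- telescoping
  set a : ℕ → ℝ := fun t => γ ^ t * Vh (s t) with ha
  have hC : ∀ x, |Vh x| ≤ R * (1 - γ)⁻¹ := abs_value_le Mhat π r hγ0 hγ1 hR
  have habsa : ∀ n, |a n| ≤ R * (1 - γ)⁻¹ * γ ^ n := by
    intro n
    rw [ha]
    calc |γ ^ n * Vh (s n)| = γ ^ n * |Vh (s n)| := by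
          rw [abs_mul, abs_pow, abs_of_pos hγ0]
      _ ≤ γ ^ n * (R * (1 - γ)⁻¹) := mul_le_mul_of_nonneg_left (hC _) (pow_nonneg hγ0.le n)
      _ = R * (1 - γ)⁻¹ * γ ^ n := by ring
  have hsumtel : Summable (fun n => a n - a (n + 1)) := by
    apply Summable.of_norm_bounded
      ((summable_geometric_of_lt_one hγ0.le hγ1).mul_left (R * (1 - γ)⁻¹ * 2))
    intro n
    rw [Real.norm_eq_abs]
    calc |a n - a (n + 1)| ≤ |a n| + |a (n + 1)| := abs_sub _ _
      _ ≤ R * (1 - γ)⁻¹ * γ ^ n + R * (1 - γ)⁻¹ * γ ^ (n + 1) :=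
          add_le_add (habsa n) (habsa (n + 1))
      _ ≤ R * (1 - γ)⁻¹ * γ ^ n + R * (1 - γ)⁻¹ * γ ^ n := by
          have hRnn : 0 ≤ R := le_trans (abs_nonneg _) (hR (s₀, π s₀))
          have : R * (1 - γ)⁻¹ * γ ^ (n + 1) ≤ R * (1 - γ)⁻¹ * γ ^ n :=
            mul_le_mul_of_nonneg_left
              (pow_le_pow_of_le_one hγ0.le hγ1.le (Nat.le_succ n)) (by positivity)
          linarith
      _ = (R * (1 - γ)⁻¹ * 2) * γ ^ n := by ring
  have ha0 : Filter.Tendsto a Filter.atTop (nhds 0) := by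
    apply squeeze_zero_norm (fun n => (habsa n))
    simpa using (tendsto_pow_atTop_nhds_zero_of_lt_one hγ0.le hγ1).const_mul (R * (1 - γ)⁻¹)
  have htel : HasSum (fun n => a n - a (n + 1)) (Vh s₀) := by
    have h1 := hsumtel.hasSum.tendsto_sum_nat
    have h2 : Filter.Tendsto (fun n => ∑ i ∈ Finset.range n, (a i - a (i + 1)))
        Filter.atTop (nhds (a 0)) := by
      simp only [Finset.sum_range_sub' a]
      simpa using Filter.Tendsto.sub tendsto_const_nhds ha0
    have : ∑' n, (a n - a (n + 1)) = a 0 := tendsto_nhds_unique h1 h2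
    have ha0' : a 0 = Vh s₀ := by
      show γ ^ 0 * Vh (traj Mstar π s₀ 0) = Vh s₀
      rw [pow_zero, one_mul]
      rfl
    rw [← ha0', ← this]; exact hsumtel.hasSum
  have hf : Summable (fun t => γ ^ t * r (s t, π (s t))) :=
    summable_val Mstar π r hγ0 hγ1 hR s₀
  have hkey : value Mstar π r γ s₀ - Vh s₀ = ∑' t, c t := by
    have := (hf.hasSum.sub htel).tsum_eq
    rw [show value Mstar π r γ s₀ = ∑' t, γ ^ t * r (s t, π (s t)) from rfl, ← this]
    apply tsum_congr
    intro t
    have hb := value_bellman Mhat π r hγ0 hγ1 hR (s t)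
    rw [hc, ha]
    show γ ^ t * r (s t, π (s t)) - (γ ^ t * Vh (s t) - γ ^ (t + 1) * Vh (s (t + 1))) = _
    rw [show Vh (s t) = r (s t, π (s t)) + γ * Vh (Mhat (s t, π (s t))) from hb]
    ring
  have hcb : ∀ t, |c t| ≤ γ * L * (γ ^ t * D t) := by
    intro t
    rw [hc]
    have hst : s (t + 1) = Mstar (s t, π (s t)) := rfl
    calc |γ ^ (t + 1) * (Vh (s (t + 1)) - Vh (Mhat (s t, π (s t))))|
        = γ ^ (t + 1) * |Vh (s (t + 1)) - Vh (Mhat (s t, π (s t)))| := by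
          rw [abs_mul, abs_pow, abs_of_pos hγ0]
      _ ≤ γ ^ (t + 1) * (L * D t) := by
          apply mul_le_mul_of_nonneg_left _ (pow_nonneg hγ0.le _)
          rw [hD]
          exact hst ▸ hLip (s (t + 1)) (Mhat (s t, π (s t)))
      _ = γ * L * (γ ^ t * D t) := by ring
  rcases eq_or_lt_of_le hL with hL0 | hLpos
  · -- L = 0 : all c t vanish, and E.toReal ≥ 0
    have hc0 : ∀ t, c t = 0 := by
      intro t
      have := hcb t
      rw [← hL0] at this
      simp only [mul_zero, zero_mul] at this
      exact abs_eq_zero.mp (le_antisymm this (abs_nonneg _))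
    have : value Mstar π r γ s₀ = Vh s₀ := by
      have : value Mstar π r γ s₀ - Vh s₀ = 0 := by rw [hkey]; simp [hc0]
      linarith
    rw [this]
    have := ENNReal.toReal_nonneg (a := E)
    show Vh s₀ ≥ Vh s₀ - E.toReal
    linarith
  · -- L > 0
    set T : ℝ≥0∞ := ∑' t : ℕ, ENNReal.ofReal (γ ^ t) * ENNReal.ofReal (D t) with hT
    have hET : E = ENNReal.ofReal (γ / (1 - γ) * L) * (ENNReal.ofReal (1 - γ) * T) := hE
    have hκ : 0 < γ / (1 - γ) * L := by positivity
    have hTne : T ≠ ⊤ := by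
      intro hTtop
      apply hfin
      rw [hET, hTtop, ENNReal.mul_top, ENNReal.mul_top]
      · simp [ENNReal.ofReal_pos.mpr hκ, (ENNReal.ofReal_pos.mpr hκ).ne']
      · simp [ENNReal.ofReal_pos.mpr hγ', (ENNReal.ofReal_pos.mpr hγ').ne']
    set g : ℕ → ℝ := fun t => γ ^ t * D t with hg
    have hgnn : ∀ t, 0 ≤ g t := fun t => mul_nonneg (pow_nonneg hγ0.le t) dist_nonneg
    have hTg : T = ∑' t, ENNReal.ofReal (g t) := by
      apply tsum_congr
      intro t
      rw [hg, ENNReal.ofReal_mul (pow_nonneg hγ0.le t)]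
    have hgsum : Summable g := by
      have := ENNReal.summable_toReal (hTg ▸ hTne)
      simpa [ENNReal.toReal_ofReal, hgnn] using this
    have hTtoReal : T.toReal = ∑' t, g t := by
      rw [hTg, ENNReal.tsum_toReal_eq (fun t => ENNReal.ofReal_ne_top)]
      exact tsum_congr fun t => ENNReal.toReal_ofReal (hgnn t)
    have hEtoReal : E.toReal = γ * L * ∑' t, g t := by
      rw [hET, ENNReal.toReal_mul, ENNReal.toReal_mul, ENNReal.toReal_ofReal hκ.le,
        ENNReal.toReal_ofReal hγ'.le, hTtoReal]
      field_simp
    have hcsum : Summable c :=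
      Summable.of_norm_bounded ((hgsum.mul_left (γ * L))) (fun t => hcb t)
    have hlow : -(γ * L * ∑' t, g t) ≤ ∑' t, c t := by
      have h1 : ∑' t, -(γ * L * g t) ≤ ∑' t, c t := by
        apply Summable.tsum_le_tsum _ ((hgsum.mul_left (γ * L)).neg) hcsum
        intro t
        have h2 := (abs_le.mp (hcb t)).1
        simp only [hg]
        linarith
      calc -(γ * L * ∑' t, g t) = ∑' t, -(γ * L * g t) := by
            rw [← tsum_mul_left, ← tsum_neg]
        _ ≤ ∑' t, c t := h1
    show value Mstar π r γ s₀ ≥ Vh s₀ - E.toReal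
    rw [hEtoReal]
    linarith [hkey, hlow]
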